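/- In a pure multicomplex, if M is a connected layer multicomplex (c.l.m.) with layers L_a, ..., L_b, then for every face S the link of S in M, layered by lk_{L_i}(S), is again a connected layer multicomplex. -/

import Mathlib

/-- `IsCLM n d a b L` : the layers `L a, …, L b` form a connected layer multicomplex
of rank `d` on `n` elements. The facets (size-`d` multisets of `[n]`) are partitioned
into the nonempty layers `L a, …, L b`, and for every multiset `S` the set of layers
whose star contains `S` is an interval. -/
def IsCLM (n d : ℕ) (a b : ℤ) (L : ℤ → Set (Multiset (Fin n))) : Prop :=
  a ≤ b ∧
  (∀ i X, X ∈ L i → Multiset.card X = d) ∧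
  (∀ i, (L i).Nonempty ↔ a ≤ i ∧ i ≤ b) ∧
  (∀ i j X, X ∈ L i → X ∈ L j → i = j) ∧
  (∀ (S : Multiset (Fin n)) (i j k : ℤ), i ≤ j → j ≤ k →
    (∃ X ∈ L i, S ≤ X) → (∃ X ∈ L k, S ≤ X) → ∃ X ∈ L j, S ≤ X)

/-- `Hclm n d` : the maximum length of connected layer multicomplexes of rank `d`
on `n` elements. -/
noncomputable def Hclm (n d : ℕ) : ℕ :=
  sSup {l | ∃ (a b : ℤ) (L : ℤ → Set (Multiset (Fin n))),
    IsCLM n d a b L ∧ (b - a).toNat = l}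

/-- If `M` is a connected layer multicomplex with layers `L a, …, L b`, then for every
face `S` of `M` the link of `S` in `M`, layered by `lk_{L i}(S)`, is again a connected
layer multicomplex (of rank `d - |S|`, its layers being the interval where they are
nonempty). -/
theorem link_isCLM (n d : ℕ) (a b : ℤ) (L : ℤ → Set (Multiset (Fin n)))
    (hM : IsCLM n d a b L) (S : Multiset (Fin n))
    (hS : ∃ i, ∃ X ∈ L i, S ≤ X) :
    ∃ a' b' : ℤ,
      IsCLM n (d - Multiset.card S) a' b'
        (fun i => {Y | ∃ X ∈ L i, S ≤ X ∧ Y = X - S}) := by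
  obtain ⟨hab, hcard, hne, hdisj, hconv⟩ := hM
  set P : ℤ → Prop := fun i => ∃ X ∈ L i, S ≤ X with hP
  have hbd : ∀ i, P i → a ≤ i ∧ i ≤ b := by
    rintro i ⟨X, hX, -⟩
    exact (hne i).1 ⟨X, hX⟩
  obtain ⟨a', ha'P, ha'min⟩ := Int.exists_least_of_bdd
    ⟨a, fun z hz => (hbd z hz).1⟩ hS
  obtain ⟨b', hb'P, hb'max⟩ := Int.exists_greatest_of_bdd
    ⟨b, fun z hz => (hbd z hz).2⟩ hS
  have hPint : ∀ i, a' ≤ i → i ≤ b' → P i :=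
    fun i h1 h2 => hconv S a' i b' h1 h2 ha'P hb'P
  refine ⟨a', b', ha'min _ hb'P, ?_, ?_, ?_, ?_⟩
  · rintro i Y ⟨X, hX, hSX, rfl⟩
    rw [Multiset.card_sub hSX, hcard i X hX]
  · intro i
    constructor
    · rintro ⟨Y, X, hX, hSX, rfl⟩
      exact ⟨ha'min i ⟨X, hX, hSX⟩, hb'max i ⟨X, hX, hSX⟩⟩
    · rintro ⟨h1, h2⟩
      obtain ⟨X, hX, hSX⟩ := hPint i h1 h2
      exact ⟨X - S, X, hX, hSX, rfl⟩
  · rintro i j Y ⟨X, hX, hSX, rfl⟩ ⟨X', hX', hSX', hYY⟩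
    have : X = X' := by
      have h1 : X - S + S = X' - S + S := by rw [hYY]
      rwa [tsub_add_cancel_of_le hSX, tsub_add_cancel_of_le hSX'] at h1
    exact hdisj i j X hX (this ▸ hX')
  · rintro S' i j k hij hjk ⟨Y, ⟨X, hX, hSX, rfl⟩, hS'Y⟩ ⟨Z, ⟨W, hW, hSW, rfl⟩, hS'Z⟩
    have h1 : S' + S ≤ X := by
      calc S' + S ≤ (X - S) + S := add_le_add_left hS'Y S
      _ = X := tsub_add_cancel_of_le hSX
    have h2 : S' + S ≤ W := by
      calc S' + S ≤ (W - S) + S := add_le_add_left hS'Z S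
      _ = W := tsub_add_cancel_of_le hSW
    obtain ⟨V, hV, hSSV⟩ := hconv (S' + S) i j k hij hjk ⟨X, hX, h1⟩ ⟨W, hW, h2⟩
    refine ⟨V - S, ⟨V, hV, le_trans (le_add_self.trans hSSV) le_rfl, rfl⟩, ?_⟩
    exact le_tsub_of_add_le_right hSSV
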